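/- Let Φ be a unital channel with Kraus operators {K_i} in canonical (mutually orthogonal under Hilbert–Schmidt inner product) form, with d-dimensional input and d_o-dimensional output. Then I(Φ) = H(Φ(π_d)) − H(ω_Φ) = log d_o − H(p), where p_i = tr(K_i†K_i)/d and H(p) = −Σ_i p_i log p_i is the Shannon entropy. -/

import Mathlib

open Matrix BigOperators Kronecker
open scoped Classical ComplexOrder

/-- The positive semidefinite square root of a positive semidefinite matrix
(the definition `Matrix.PosSemidef.sqrt` of the older Mathlib, removed since). -/
noncomputable def Matrix.PosSemidef.sqrt {n 𝕜 : Type*} [Fintype n] [DecidableEq n] [RCLike 𝕜]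
    {A : Matrix n n 𝕜} (hA : A.PosSemidef) : Matrix n n 𝕜 :=
  hA.1.eigenvectorUnitary.1 * Matrix.diagonal ((↑) ∘ (Real.sqrt ∘ hA.1.eigenvalues)) *
    (star hA.1.eigenvectorUnitary : Matrix n n 𝕜)

namespace QCap

/-- Trace norm: `‖A‖₁ = tr √(AᴴA)`. -/
noncomputable def traceNorm {ι : Type*} [Fintype ι] [DecidableEq ι] (A : Matrix ι ι ℂ) : ℝ :=
  ((Matrix.posSemidef_conjTranspose_mul_self A).sqrt.trace).re

/-- Trace distance `D_t(ρ,σ) = ‖ρ-σ‖₁ / 2`. -/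
noncomputable def traceDist {ι : Type*} [Fintype ι] [DecidableEq ι] (ρ σ : Matrix ι ι ℂ) : ℝ :=
  traceNorm (ρ - σ) / 2

/-- von Neumann entropy via eigenvalues, `H(ρ) = -∑ λᵢ log λᵢ`. -/
noncomputable def vnEntropy {ι : Type*} [Fintype ι] [DecidableEq ι] (ρ : Matrix ι ι ℂ) : ℝ :=
  if h : ρ.IsHermitian then ∑ i, Real.negMulLog (h.eigenvalues i) else 0

/-- A density operator: positive semidefinite with unit trace. -/
def IsDensity {ι : Type*} [Fintype ι] (ρ : Matrix ι ι ℂ) : Prop :=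
  ρ.PosSemidef ∧ ρ.trace = 1

/-- Kraus condition `∑ Kᵢᴴ Kᵢ = 1` (trace preservation for a CP map). -/
def IsKraus {ι κ α : Type*} [Fintype ι] [DecidableEq ι] [Fintype κ] [Fintype α]
    (K : κ → Matrix α ι ℂ) : Prop :=
  ∑ k, (K k)ᴴ * K k = 1

/-- Channel action `Φ(ρ) = ∑ Kᵢ ρ Kᵢᴴ`. -/
noncomputable def channelApply {ι κ α : Type*} [Fintype ι] [Fintype κ]
    (K : κ → Matrix α ι ℂ) (ρ : Matrix ι ι ℂ) : Matrix α α ℂ :=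
  ∑ k, K k * ρ * (K k)ᴴ

/-- Choi state `ω_Φ = (Φ ⊗ id)(|ω⟩⟨ω|)` with `|ω⟩ = (1/√d) ∑ᵢ |ii⟩`. -/
noncomputable def choiState {ι κ α : Type*} [Fintype ι] [DecidableEq ι] [Fintype κ]
    (K : κ → Matrix α ι ℂ) : Matrix (α × ι) (α × ι) ℂ :=
  (Fintype.card ι : ℂ)⁻¹ •
    ∑ i : ι, ∑ j : ι,
      (channelApply K (Matrix.single i j 1)) ⊗ₖ (Matrix.single i j 1)

/-- Partial trace over the first tensor factor. -/
noncomputable def ptraceFst {α β : Type*} [Fintype α]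
    (M : Matrix (α × β) (α × β) ℂ) : Matrix β β ℂ :=
  Matrix.of fun i j => ∑ a, M (a, i) (a, j)

/-- Partial trace over the second tensor factor. -/
noncomputable def ptraceSnd {α β : Type*} [Fintype β]
    (M : Matrix (α × β) (α × β) ℂ) : Matrix α α ℂ :=
  Matrix.of fun a b => ∑ i, M (a, i) (b, i)

/-- Fidelity `F(ρ,σ) = (tr √(√ρ σ √ρ))²`. -/
noncomputable def fidelity {ι : Type*} [Fintype ι] [DecidableEq ι] (ρ σ : Matrix ι ι ℂ) : ℝ :=
  if hρ : ρ.PosSemidef then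
    if h : (hρ.sqrt * σ * hρ.sqrt).PosSemidef then ((h.sqrt.trace).re) ^ 2 else 0
  else 0

/-- Coherent information of the channel at the maximally mixed input:
`I(Φ) = H(Φ(π_d)) - H(ω_Φ)`. -/
noncomputable def cohInfo {ι κ α : Type*} [Fintype ι] [DecidableEq ι] [Fintype κ]
    [Fintype α] [DecidableEq α] (K : κ → Matrix α ι ℂ) : ℝ :=
  vnEntropy (channelApply K ((Fintype.card ι : ℂ)⁻¹ • (1 : Matrix ι ι ℂ)))
    - vnEntropy (choiState K)

end QCap

section Aux
open Polynomial Matrix BigOperators Kronecker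
open scoped Classical ComplexOrder

lemma QCapAux.charpoly_diagonal' {n : Type*} [Fintype n] [DecidableEq n] (d : n → ℂ) :
    (Matrix.diagonal d).charpoly = ∏ i, (X - C (d i)) := by
  have h : (Matrix.diagonal d).charmatrix = Matrix.diagonal (fun i => X - C (d i)) := by
    rw [show (Matrix.diagonal d).charmatrix = Matrix.scalar n X - (Matrix.diagonal d).map C from rfl]
    rw [Matrix.diagonal_map (map_zero C), Matrix.scalar]
    ext i j
    by_cases hij : i = j <;> simp [hij, Matrix.diagonal]
  rw [Matrix.charpoly, h, Matrix.det_diagonal]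

lemma QCapAux.charpoly_unitary_conj {n : Type*} [Fintype n] [DecidableEq n]
    (U A : Matrix n n ℂ) (hU : Uᴴ * U = 1) :
    (U * A * Uᴴ).charpoly = A.charpoly := by
  have hU2 : U * Uᴴ = 1 := mul_eq_one_comm.mp hU
  have key : (U * A * Uᴴ).charmatrix = (U.map C) * A.charmatrix * (Uᴴ.map C) := by
    rw [show (U * A * Uᴴ).charmatrix = Matrix.scalar n X - (U * A * Uᴴ).map C from rfl,
        show A.charmatrix = Matrix.scalar n X - A.map C from rfl]
    rw [Matrix.mul_sub, Matrix.sub_mul]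
    congr 1
    · rw [Matrix.mul_assoc, (Matrix.scalar_commute X (Commute.all X) (Uᴴ.map C)).eq,
        ← Matrix.mul_assoc, ← Matrix.map_mul (f := C), hU2]
      ext i j
      by_cases hij : i = j <;> simp [hij, Matrix.scalar, Matrix.one_apply, Matrix.diagonal]
    · rw [← Matrix.map_mul (f := C), ← Matrix.map_mul (f := C)]
  have hdet : (U.map C).det * (Uᴴ.map C).det = 1 := by
    rw [← Matrix.det_mul, ← Matrix.map_mul (f := C), hU2]
    simp
  rw [Matrix.charpoly, key, Matrix.det_mul, Matrix.det_mul, Matrix.charpoly]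
  ring_nf
  rw [mul_comm, ← mul_assoc]
  rw [mul_comm ((Uᴴ.map C).det)]
  rw [hdet, one_mul]

lemma QCapAux.vnEntropy_of_unitary_diag {n : Type*} [Fintype n] [DecidableEq n]
    (A V : Matrix n n ℂ) (q : n → ℝ) (hV : Vᴴ * V = 1)
    (hA : A = V * Matrix.diagonal (fun i => (q i : ℂ)) * Vᴴ) :
    QCap.vnEntropy A = ∑ i, Real.negMulLog (q i) := by
  have hD : (Matrix.diagonal (fun i => (q i : ℂ))).IsHermitian := by
    rw [Matrix.IsHermitian, Matrix.diagonal_conjTranspose]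
    congr 1
    ext i
    simp [Pi.star_def, Complex.conj_ofReal]
  have hH : A.IsHermitian := by
    rw [hA, Matrix.IsHermitian, Matrix.conjTranspose_mul, Matrix.conjTranspose_mul,
      Matrix.conjTranspose_conjTranspose, hD.eq, Matrix.mul_assoc]
  rw [QCap.vnEntropy, dif_pos hH]
  have h1 : A.charpoly = ∏ i, (X - C ((q i : ℂ))) := by
    rw [hA, QCapAux.charpoly_unitary_conj _ _ hV, QCapAux.charpoly_diagonal']
  have hUmem := (Matrix.IsHermitian.eigenvectorUnitary hH).2
  have h2 : A.charpoly = ∏ i, (X - C ((hH.eigenvalues i : ℂ))) := by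
    conv_lhs => rw [hH.spectral_theorem]
    rw [Unitary.conjStarAlgAut_apply]
    rw [show (star (Matrix.IsHermitian.eigenvectorUnitary hH : Matrix n n ℂ)) =
        (Matrix.IsHermitian.eigenvectorUnitary hH : Matrix n n ℂ)ᴴ from rfl,
      QCapAux.charpoly_unitary_conj _ _ (Matrix.mem_unitaryGroup_iff'.mp hUmem)]
    rw [show (RCLike.ofReal ∘ hH.eigenvalues : n → ℂ)
        = fun i => ((hH.eigenvalues i : ℝ) : ℂ) from rfl,
      QCapAux.charpoly_diagonal']
  have hroots : (Finset.univ.val.map fun i => ((q i : ℝ) : ℂ))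
      = (Finset.univ.val.map fun i => ((hH.eigenvalues i : ℝ) : ℂ)) := by
    have e := h1.symm.trans h2
    have r1 : ∀ f : n → ℂ, (∏ i, (X - C (f i))).roots = Finset.univ.val.map f := by
      intro f
      rw [show (∏ i, (X - C (f i))) = ((Finset.univ.val.map f).map (fun a => X - C a)).prod by
        rw [Finset.prod, Multiset.map_map]
        rfl]
      exact Polynomial.roots_multiset_prod_X_sub_C _
    have := congrArg Polynomial.roots e
    rwa [r1, r1] at this
  have key := congrArg (fun s : Multiset ℂ => (s.map (fun z => Real.negMulLog z.re)).sum) hroots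
  simp only [Multiset.map_map, Function.comp] at key
  have lhs_eq : ∑ i, Real.negMulLog (hH.eigenvalues i)
      = (Finset.univ.val.map fun i => Real.negMulLog (((hH.eigenvalues i : ℝ) : ℂ)).re).sum := by
    rw [Finset.sum]
    simp
  have rhs_eq : ∑ i, Real.negMulLog (q i)
      = (Finset.univ.val.map fun i => Real.negMulLog (((q i : ℝ) : ℂ)).re).sum := by
    rw [Finset.sum]
    simp
  rw [lhs_eq, rhs_eq]
  simp only [Complex.ofReal_re] at key ⊢
  exact key.symm

lemma QCapAux.choi_entry {ι κ α : Type*} [Fintype ι] [DecidableEq ι] [Fintype κ] [Fintype α]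
    [DecidableEq α] (K : κ → Matrix α ι ℂ) (a b : α) (i j : ι) :
    QCap.choiState K (a,i) (b,j) = (Fintype.card ι : ℂ)⁻¹ * ∑ k, K k a i * star (K k b j) := by
  rw [QCap.choiState]
  simp only [Matrix.smul_apply, Matrix.sum_apply, Matrix.kroneckerMap_apply, smul_eq_mul]
  congr 1
  have h1 : ∀ i' j' : ι, (Matrix.single i' j' (1:ℂ)) i j
      = if i' = i then (if j' = j then 1 else 0) else 0 := by
    intro i' j'
    simp [Matrix.single, Matrix.of_apply, ite_and]
  simp only [h1, mul_ite, mul_one, mul_zero]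
  rw [Fintype.sum_eq_single i (fun x hx => by
    apply Finset.sum_eq_zero; intro x1 _; simp [hx])]
  simp only [if_pos rfl]
  rw [Fintype.sum_eq_single j (fun x hx => by simp [hx])]
  simp only [if_pos rfl]
  simp only [QCap.channelApply, Matrix.sum_apply]
  apply Finset.sum_congr rfl
  intro k _
  rw [Matrix.mul_apply]
  simp only [Matrix.conjTranspose_apply, Matrix.mul_apply, Matrix.single, Matrix.of_apply]
  simp [Finset.sum_ite_eq, ite_and, mul_comm]

end Aux

open QCap Matrix in
/-- for a unital channel with mutually orthogonal Kraus operators,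
`I(Φ) = log d_o − H(p)` with `pᵢ = tr(Kᵢ†Kᵢ)/d`. -/
theorem cohInfo_unital_canonical {ι κ α : Type*} [Fintype ι] [DecidableEq ι] [Nonempty ι]
    [Fintype κ] [Fintype α] [DecidableEq α] [Nonempty α]
    (K : κ → Matrix α ι ℂ) (hK : IsKraus K)
    (hU : channelApply K ((Fintype.card ι : ℂ)⁻¹ • (1 : Matrix ι ι ℂ)) =
      (Fintype.card α : ℂ)⁻¹ • (1 : Matrix α α ℂ))
    (horth : ∀ i j, i ≠ j → ((K i)ᴴ * K j).trace = 0) :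
    cohInfo K = Real.log (Fintype.card α) -
      ∑ i, Real.negMulLog ((((K i)ᴴ * K i).trace).re / (Fintype.card ι : ℝ)) := by
  classical
  have hcι : (Fintype.card ι : ℝ) ≠ 0 := Nat.cast_ne_zero.mpr Fintype.card_ne_zero
  have hcα : (Fintype.card α : ℝ) ≠ 0 := Nat.cast_ne_zero.mpr Fintype.card_ne_zero
  have e1 : vnEntropy (channelApply K ((Fintype.card ι : ℂ)⁻¹ • (1 : Matrix ι ι ℂ)))
      = Real.log (Fintype.card α) := by
    rw [hU]
    have hdiag : ((Fintype.card α : ℂ)⁻¹ • (1 : Matrix α α ℂ))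
        = 1 * Matrix.diagonal (fun _ : α => (((Fintype.card α : ℝ)⁻¹ : ℝ) : ℂ))
          * (1 : Matrix α α ℂ)ᴴ := by
      rw [Matrix.conjTranspose_one, one_mul, mul_one]
      ext a b
      by_cases h : a = b <;>
        simp [h, Matrix.diagonal_apply, Matrix.one_apply]
    rw [QCapAux.vnEntropy_of_unitary_diag _ 1 _ (by simp) hdiag]
    rw [Finset.sum_const, Finset.card_univ, nsmul_eq_mul, Real.negMulLog, Real.log_inv]
    rw [neg_mul_neg, ← mul_assoc, mul_inv_cancel₀ hcα, one_mul]
  have e2 : vnEntropy (choiState K)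
      = ∑ k, Real.negMulLog ((((K k)ᴴ * K k).trace).re / (Fintype.card ι : ℝ)) := by
    set v : κ → EuclideanSpace ℂ (α × ι) := fun k => WithLp.toLp 2 (fun x : α × ι => K k x.1 x.2) with hv_def
    set tR : κ → ℝ := fun k => ∑ x : α × ι, Complex.normSq (K k x.1 x.2) with htR_def
    have htnn : ∀ k, 0 ≤ tR k := fun k => Finset.sum_nonneg fun x _ => Complex.normSq_nonneg _
    have htr : ∀ k l, ((K k)ᴴ * K l).trace
        = ∑ x : α × ι, (starRingEnd ℂ) (K k x.1 x.2) * K l x.1 x.2 := by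
      intro k l
      rw [Matrix.trace]
      simp only [Matrix.diag_apply, Matrix.mul_apply, Matrix.conjTranspose_apply]
      rw [Fintype.sum_prod_type, Finset.sum_comm]
      rfl
    have htr_self : ∀ k, ((K k)ᴴ * K k).trace = ((tR k : ℝ) : ℂ) := by
      intro k
      rw [htr k k, htR_def]
      push_cast
      apply Finset.sum_congr rfl
      intro x _
      rw [Complex.normSq_eq_conj_mul_self]
    have hinner : ∀ k l, (inner ℂ (v k) (v l) : ℂ) = ((K k)ᴴ * K l).trace := by
      intro k l
      rw [htr k l, PiLp.inner_apply]
      simp only [RCLike.inner_apply', hv_def, PiLp.toLp_apply]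
    have hKzero : ∀ k, tR k = 0 → K k = 0 := by
      intro k hk
      rw [htR_def] at hk
      ext a i
      have := (Finset.sum_eq_zero_iff_of_nonneg
        (fun x _ => Complex.normSq_nonneg (K k x.1 x.2))).mp hk (a, i) (Finset.mem_univ _)
      simpa using Complex.normSq_eq_zero.mp this
    let S := {k : κ // tR k ≠ 0}
    set u : S → EuclideanSpace ℂ (α × ι) :=
      fun k => (((Real.sqrt (tR k.1) : ℝ) : ℂ))⁻¹ • v k.1 with hu_def
    have hu_orth : Orthonormal ℂ u := by
      rw [orthonormal_iff_ite]
      intro k l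
      simp only [hu_def]
      rw [inner_smul_left, inner_smul_right, hinner, map_inv₀, Complex.conj_ofReal]
      by_cases h : k = l
      · subst h
        rw [if_pos rfl, htr_self, ← mul_assoc, ← mul_inv, ← Complex.ofReal_mul,
          Real.mul_self_sqrt (htnn k.1), inv_mul_cancel₀ (Complex.ofReal_ne_zero.mpr k.2)]
      · rw [if_neg h, horth _ _ (fun e => h (Subtype.ext e)), mul_zero, mul_zero]
    have hcardle : Fintype.card S ≤ Fintype.card (α × ι) := by
      have := hu_orth.linearIndependent.fintype_card_le_finrank
      rwa [finrank_euclideanSpace] at this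
    obtain ⟨f⟩ : Nonempty (S ↪ (α × ι)) := Function.Embedding.nonempty_iff_card_le.mpr hcardle
    set w : (α × ι) → EuclideanSpace ℂ (α × ι) :=
      fun x => if h : ∃ k : S, f k = x then u h.choose else 0 with hw_def
    have hw : ∀ k : S, w (f k) = u k := by
      intro k
      have h : ∃ k' : S, f k' = f k := ⟨k, rfl⟩
      simp only [hw_def, dif_pos h]
      exact congrArg u (f.injective h.choose_spec)
    have hres : Orthonormal ℂ ((Set.range f).restrict w) := by
      rw [orthonormal_iff_ite]
      intro x y
      obtain ⟨kx, hkx⟩ := x.2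
      obtain ⟨ky, hky⟩ := y.2
      have hx : (Set.range f).restrict w x = u kx := by rw [show (Set.range f).restrict w x = w x from rfl, ← hkx, hw]
      have hy : (Set.range f).restrict w y = u ky := by rw [show (Set.range f).restrict w y = w y from rfl, ← hky, hw]
      rw [hx, hy, orthonormal_iff_ite.mp hu_orth kx ky]
      have hxy : (x = y) ↔ (kx = ky) := by
        constructor
        · intro e
          exact f.injective (by rw [hkx, hky]; exact congrArg Subtype.val e)
        · intro e
          apply Subtype.ext
          rw [← hkx, ← hky, e]
      by_cases h : kx = ky
      · rw [if_pos h, if_pos (hxy.mpr h)]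
      · rw [if_neg h, if_neg (fun e => h (hxy.mp e))]
    obtain ⟨b, hb⟩ := Orthonormal.exists_orthonormalBasis_extension_of_card_eq
      (𝕜 := ℂ) (by simp) hres
    set V : Matrix (α × ι) (α × ι) ℂ := Matrix.of (fun x y => b y x) with hV_def
    have hVapp : ∀ x y, V x y = b y x := fun x y => rfl
    have hV : Vᴴ * V = 1 := by
      ext y y'
      rw [Matrix.mul_apply, Matrix.one_apply]
      have horm := orthonormal_iff_ite.mp b.orthonormal y y'
      rw [PiLp.inner_apply] at horm
      simp only [RCLike.inner_apply'] at horm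
      simpa [Matrix.conjTranspose_apply, hVapp] using horm
    set p : S → ℝ := fun k => tR k.1 / (Fintype.card ι : ℝ) with hp_def
    set q : (α × ι) → ℝ := fun x => if h : ∃ k : S, f k = x then p h.choose else 0 with hq_def
    have hq : ∀ k : S, q (f k) = p k := by
      intro k
      have h : ∃ k' : S, f k' = f k := ⟨k, rfl⟩
      simp only [hq_def, dif_pos h]
      exact congrArg p (f.injective h.choose_spec)
    have hq0 : ∀ x, (¬ ∃ k : S, f k = x) → q x = 0 := fun x h => dif_neg h
    have hAq : choiState K = V * Matrix.diagonal (fun x => ((q x : ℝ) : ℂ)) * Vᴴ := by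
      ext x y
      obtain ⟨a, i⟩ := x
      obtain ⟨c, j⟩ := y
      rw [QCapAux.choi_entry]
      have expand : (V * Matrix.diagonal (fun x => ((q x : ℝ) : ℂ)) * Vᴴ) (a,i) (c,j)
          = ∑ z : α × ι, V (a,i) z * ((q z : ℝ) : ℂ) * star (V (c,j) z) := by
        rw [Matrix.mul_apply]
        apply Finset.sum_congr rfl
        intro z _
        rw [Matrix.mul_diagonal, Matrix.conjTranspose_apply]
      rw [expand]
      have hzero : ∀ z ∈ Finset.univ, z ∉ Finset.univ.map f →
          V (a,i) z * ((q z : ℝ) : ℂ) * star (V (c,j) z) = 0 := by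
        intro z _ hz
        rw [hq0 z (fun ⟨k, hk⟩ => hz (Finset.mem_map.mpr ⟨k, Finset.mem_univ _, hk⟩))]
        simp
      rw [← Finset.sum_subset (Finset.subset_univ (Finset.univ.map f)) hzero, Finset.sum_map]
      have hlhs : ∑ k : κ, K k a i * star (K k c j)
          = ∑ k : S, K k.1 a i * star (K k.1 c j) := by
        have h1 : ∑ k : S, K k.1 a i * star (K k.1 c j)
            = ∑ k ∈ Finset.univ.filter (fun k => tR k ≠ 0), K k a i * star (K k c j) :=
          (Finset.sum_subtype (p := fun k => tR k ≠ 0)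
            (Finset.univ.filter (fun k => tR k ≠ 0)) (fun k => by simp)
            (fun k => K k a i * star (K k c j))).symm
        rw [h1, Finset.sum_filter_of_ne]
        intro x _ hfx htx
        exact hfx (by rw [hKzero x htx]; simp)
      rw [hlhs, Finset.mul_sum]
      apply Finset.sum_congr rfl
      intro k _
      have hbfk : b (f k) = u k := by rw [hb (f k) ⟨k, rfl⟩, hw]
      rw [hVapp, hVapp, hbfk, hq]
      have hu1 : u k (a,i) = (((Real.sqrt (tR k.1) : ℝ) : ℂ))⁻¹ * K k.1 a i := by
        simp only [hu_def, hv_def, PiLp.smul_apply, smul_eq_mul, PiLp.toLp_apply]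
      have hu2 : u k (c,j) = (((Real.sqrt (tR k.1) : ℝ) : ℂ))⁻¹ * K k.1 c j := by
        simp only [hu_def, hv_def, PiLp.smul_apply, smul_eq_mul, PiLp.toLp_apply]
      have hc : ((p k : ℝ) : ℂ) * ((((Real.sqrt (tR k.1) : ℝ) : ℂ))⁻¹
          * (((Real.sqrt (tR k.1) : ℝ) : ℂ))⁻¹) = (Fintype.card ι : ℂ)⁻¹ := by
        rw [← mul_inv, ← Complex.ofReal_mul, Real.mul_self_sqrt (htnn k.1)]
        simp only [hp_def]
        rw [Complex.ofReal_div]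
        have ht : (tR k.1 : ℂ) ≠ 0 := Complex.ofReal_ne_zero.mpr k.2
        have hd : ((Fintype.card ι : ℝ) : ℂ) ≠ 0 := Complex.ofReal_ne_zero.mpr hcι
        field_simp
        norm_cast
      have hsc : star ((((Real.sqrt (tR k.1) : ℝ) : ℂ))⁻¹)
          = (((Real.sqrt (tR k.1) : ℝ) : ℂ))⁻¹ := by
        rw [star_inv₀, Complex.star_def, Complex.conj_ofReal]
      rw [hu1, hu2, ← hc, StarMul.star_mul, hsc]
      ring
    rw [QCapAux.vnEntropy_of_unitary_diag (choiState K) V q hV hAq]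
    have s1 : ∑ x : α × ι, Real.negMulLog (q x) = ∑ k : S, Real.negMulLog (p k) := by
      have hzero : ∀ z ∈ Finset.univ, z ∉ Finset.univ.map f → Real.negMulLog (q z) = 0 := by
        intro z _ hz
        rw [hq0 z (fun ⟨k, hk⟩ => hz (Finset.mem_map.mpr ⟨k, Finset.mem_univ _, hk⟩)),
          Real.negMulLog_zero]
      rw [← Finset.sum_subset (Finset.subset_univ (Finset.univ.map f)) hzero, Finset.sum_map]
      exact Finset.sum_congr rfl (fun k _ => by rw [hq])
    have s2 : ∑ k : S, Real.negMulLog (p k)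
        = ∑ k : κ, Real.negMulLog (tR k / (Fintype.card ι : ℝ)) := by
      simp only [hp_def]
      have h1 : ∑ k : S, Real.negMulLog (tR k.1 / (Fintype.card ι : ℝ))
          = ∑ k ∈ Finset.univ.filter (fun k => tR k ≠ 0),
              Real.negMulLog (tR k / (Fintype.card ι : ℝ)) :=
        (Finset.sum_subtype (p := fun k => tR k ≠ 0)
          (Finset.univ.filter (fun k => tR k ≠ 0)) (fun k => by simp)
          (fun k => Real.negMulLog (tR k / (Fintype.card ι : ℝ)))).symm
      rw [h1, Finset.sum_filter_of_ne]
      intro x _ hfx htx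
      exact hfx (by rw [htx, zero_div, Real.negMulLog_zero])
    rw [s1, s2]
    apply Finset.sum_congr rfl
    intro k _
    rw [htr_self k, Complex.ofReal_re]
  unfold cohInfo
  rw [e1, e2]
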